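/- If f : ℝ² → ℝ has the form f(x) = P(x) e^{-π|x|²} with P a real polynomial, then its two-sided quaternion Fourier transform has the form 𝓕{f}(ξ) = Q(ξ) e^{-π|ξ|²} where Q is a polynomial with quaternion coefficients of the same degree as P. -/

import Mathlib

open MeasureTheory Real

noncomputable section

abbrev ℍ : Type := Quaternion ℝ
def Qi : ℍ := ⟨0,1,0,0⟩
def Qj : ℍ := ⟨0,0,1,0⟩

/-- e^{iθ} as a quaternion. -/
def expI (θ : ℝ) : ℍ := ⟨Real.cos θ, Real.sin θ, 0, 0⟩
/-- e^{jθ} as a quaternion. -/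
def expJ (θ : ℝ) : ℍ := ⟨Real.cos θ, 0, Real.sin θ, 0⟩

/-- The two-sided quaternion Fourier transform. -/
def QFT (f : ℝ × ℝ → ℍ) (ξ : ℝ × ℝ) : ℍ :=
  ∫ x : ℝ × ℝ, expI (-(2 * π * ξ.1 * x.1)) * f x * expJ (-(2 * π * ξ.2 * x.2))

/-- Euclidean norm on ℝ². -/
def enorm2 (x : ℝ × ℝ) : ℝ := Real.sqrt (x.1 ^ 2 + x.2 ^ 2)

/-- The m-th real component of f, viewed as a quaternion-valued function. -/
def qcomp (f : ℝ × ℝ → ℍ) (m : Fin 4) : ℝ × ℝ → ℍ :=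
  fun x => match m with
  | 0 => ((f x).re : ℍ) | 1 => ((f x).imI : ℍ) | 2 => ((f x).imJ : ℍ) | 3 => ((f x).imK : ℍ)

/-- ‖𝓕{f}(ξ)‖_Q := √(Σ_m |𝓕{f_m}(ξ)|_Q²). -/
def QnormF (f : ℝ × ℝ → ℍ) (ξ : ℝ × ℝ) : ℝ :=
  Real.sqrt (∑ m : Fin 4, ‖QFT (qcomp f m) ξ‖ ^ 2)

/-- A quaternion-coefficient polynomial on ℝ², given by its four real components. -/
def qpoly (c : Fin 4 → MvPolynomial (Fin 2) ℝ) (x : ℝ × ℝ) : ℍ :=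
  ⟨MvPolynomial.eval ![x.1, x.2] (c 0), MvPolynomial.eval ![x.1, x.2] (c 1),
   MvPolynomial.eval ![x.1, x.2] (c 2), MvPolynomial.eval ![x.1, x.2] (c 3)⟩

open Polynomial Complex

/-- Pair of real polynomials (aₙ, bₙ) such that
`∫ xⁿ e^{-πx²} e^{-2πiξx} dx = (aₙ(ξ) + i bₙ(ξ)) e^{-πξ²}`. -/
def pAB : ℕ → Polynomial ℝ × Polynomial ℝ
  | 0 => (1, 0)
  | n+1 =>
    (X * (pAB n).2 - C (1/(2*π)) * derivative (pAB n).2,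
     C (1/(2*π)) * derivative (pAB n).1 - X * (pAB n).1)

lemma pAB_deg (n : ℕ) :
    (Even n → (pAB n).2 = 0 ∧ (pAB n).1.natDegree = n ∧ (pAB n).1 ≠ 0) ∧
    (¬ Even n → (pAB n).1 = 0 ∧ (pAB n).2.natDegree = n ∧ (pAB n).2 ≠ 0) := by
  induction n with
  | zero => simp [pAB]
  | succ n ih =>
    rcases Nat.even_or_odd n with he | ho
    · obtain ⟨hb, hdeg, hne⟩ := ih.1 he
      have hXa : (X * (pAB n).1).natDegree = n + 1 := by
        rw [natDegree_mul X_ne_zero hne, natDegree_X, hdeg, add_comm]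
      have hlt : (C (1/(2*π)) * derivative (pAB n).1).natDegree < (X * (pAB n).1).natDegree := by
        rw [hXa]
        calc (C (1/(2*π)) * derivative (pAB n).1).natDegree
            ≤ (derivative (pAB n).1).natDegree := natDegree_C_mul_le _ _
          _ ≤ (pAB n).1.natDegree - 1 := natDegree_derivative_le _
          _ < n + 1 := by omega
      have hdeg' : ((pAB (n+1)).2).natDegree = n + 1 := by
        show (C (1/(2*π)) * derivative (pAB n).1 - X * (pAB n).1).natDegree = n + 1
        rw [natDegree_sub_eq_right_of_natDegree_lt hlt, hXa]
      constructor
      · intro h; exact absurd h (by simp [Nat.even_add_one, he])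
      · intro _
        refine ⟨?_, hdeg', ?_⟩
        · show X * (pAB n).2 - C (1/(2*π)) * derivative (pAB n).2 = 0
          simp [hb]
        · intro h0; rw [h0] at hdeg'; simp at hdeg'
    · obtain ⟨ha, hdeg, hne⟩ := ih.2 (Nat.not_even_iff_odd.mpr ho)
      have hXb : (X * (pAB n).2).natDegree = n + 1 := by
        rw [natDegree_mul X_ne_zero hne, natDegree_X, hdeg, add_comm]
      have hlt : (C (1/(2*π)) * derivative (pAB n).2).natDegree < (X * (pAB n).2).natDegree := by
        rw [hXb]
        calc (C (1/(2*π)) * derivative (pAB n).2).natDegree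
            ≤ (derivative (pAB n).2).natDegree := natDegree_C_mul_le _ _
          _ ≤ (pAB n).2.natDegree - 1 := natDegree_derivative_le _
          _ < n + 1 := by omega
      have hdeg' : ((pAB (n+1)).1).natDegree = n + 1 := by
        show (X * (pAB n).2 - C (1/(2*π)) * derivative (pAB n).2).natDegree = n + 1
        rw [sub_eq_neg_add, natDegree_add_eq_right_of_natDegree_lt (by simpa using hlt), hXb]
      constructor
      · intro _
        refine ⟨?_, hdeg', ?_⟩
        · show C (1/(2*π)) * derivative (pAB n).1 - X * (pAB n).1 = 0
          simp [ha]
        · intro h0; rw [h0] at hdeg'; simp at hdeg'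
      · intro h; exact absurd (Nat.even_add_one.mpr (Nat.not_even_iff_odd.mpr ho ∘ id)) h

lemma pAB_natDegree_le (n : ℕ) : (pAB n).1.natDegree ≤ n ∧ (pAB n).2.natDegree ≤ n := by
  rcases Nat.even_or_odd n with he | ho
  · obtain ⟨hb, hdeg, _⟩ := (pAB_deg n).1 he
    exact ⟨le_of_eq hdeg, by simp [hb]⟩
  · obtain ⟨ha, hdeg, _⟩ := (pAB_deg n).2 (Nat.not_even_iff_odd.mpr ho)
    exact ⟨by simp [ha], le_of_eq hdeg⟩

lemma integrable_pow_gauss (n : ℕ) :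
    Integrable (fun x : ℝ => x ^ n * rexp (-(π * x^2))) := by
  have := integrable_rpow_mul_exp_neg_mul_sq (b := π) pi_pos
    (s := (n : ℝ)) ((by norm_num : (-1:ℝ) < 0).trans_le (Nat.cast_nonneg n))
  simpa [Real.rpow_natCast, neg_mul] using this

def gC (n : ℕ) : ℝ → ℂ := fun x => ((x ^ n * rexp (-(π * x^2)) : ℝ) : ℂ)

lemma integrable_gC (n : ℕ) : Integrable (gC n) := (integrable_pow_gauss n).ofReal

lemma fourier_pow_gauss (n : ℕ) (ξ : ℝ) :
    FourierTransform.fourier (gC n) ξ =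
      ((((pAB n).1.eval ξ : ℝ) : ℂ) + (((pAB n).2.eval ξ : ℝ) : ℂ) * Complex.I)
        * ((rexp (-(π * ξ^2)) : ℝ) : ℂ) := by
  induction n generalizing ξ with
  | zero =>
    have h0 : gC 0 = fun x : ℝ => Complex.exp (-↑π * (1:ℂ) * (x:ℂ)^2) := by
      funext x
      simp only [gC, pow_zero, one_mul, Complex.ofReal_exp]
      congr 1
      push_cast; ring
    rw [h0, fourier_gaussian_pi (by norm_num : (0:ℝ) < (1:ℂ).re)]
    simp [pAB, Complex.ofReal_exp]
  | succ n ih =>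
    set a : Polynomial ℝ := (pAB n).1
    set b : Polynomial ℝ := (pAB n).2
    -- the function Φ = 𝓕 (gC n)
    have hfun : FourierTransform.fourier (gC n) = fun s : ℝ =>
        (((a.eval s : ℝ) : ℂ) + ((b.eval s : ℝ) : ℂ) * Complex.I) * ((rexp (-(π * s^2)) : ℝ) : ℂ) :=
      funext ih
    -- derivative of Φ at ξ
    have hE : HasDerivAt (fun s : ℝ => ((rexp (-(π * s^2)) : ℝ) : ℂ))
        ((rexp (-(π * ξ^2)) * (-(π * (2 * ξ))) : ℝ) : ℂ) ξ := by
      have h1 : HasDerivAt (fun s : ℝ => -(π * s^2)) (-(π * (2 * ξ))) ξ := by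
        simpa using ((hasDerivAt_pow 2 ξ).const_mul π).fun_neg
      exact (h1.exp).ofReal_comp
    have hA : HasDerivAt (fun s : ℝ => (((a.eval s : ℝ) : ℂ) + ((b.eval s : ℝ) : ℂ) * Complex.I))
        (((a.derivative.eval ξ : ℝ) : ℂ) + ((b.derivative.eval ξ : ℝ) : ℂ) * Complex.I) ξ := by
      exact ((a.hasDerivAt ξ).ofReal_comp).add (((b.hasDerivAt ξ).ofReal_comp).mul_const _)
    have hΦ : HasDerivAt (FourierTransform.fourier (gC n))
        ((((a.derivative.eval ξ : ℝ) : ℂ) + ((b.derivative.eval ξ : ℝ) : ℂ) * Complex.I)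
            * ((rexp (-(π * ξ^2)) : ℝ) : ℂ)
          + (((a.eval ξ : ℝ) : ℂ) + ((b.eval ξ : ℝ) : ℂ) * Complex.I)
            * ((rexp (-(π * ξ^2)) * (-(π * (2 * ξ))) : ℝ) : ℂ)) ξ := by
      rw [hfun]; exact hA.mul hE
    -- derivative from the Fourier side
    have hint' : Integrable (fun x : ℝ => x • gC n x) := by
      have : (fun x : ℝ => x • gC n x) = gC (n+1) := by
        funext x
        simp only [gC, real_smul]
        push_cast; ring
      rw [this]; exact (integrable_pow_gauss (n+1)).ofReal
    have hd := Real.hasDerivAt_fourier (integrable_gC n) hint' ξ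
    have hswap : FourierTransform.fourier (fun x : ℝ => (-2 * ↑π * Complex.I * ↑x) • gC n x) ξ
        = (-2 * ↑π * Complex.I) * FourierTransform.fourier (gC (n+1)) ξ := by
      rw [Real.fourier_real_eq_integral_exp_smul,
          Real.fourier_real_eq_integral_exp_smul, ← integral_const_mul]
      congr 1
      funext x
      simp only [smul_eq_mul, gC]
      push_cast
      ring
    rw [hswap] at hd
    have hkey := hd.unique hΦ
    have hne : (-2 * (π:ℂ) * Complex.I) ≠ 0 := by
      simp [Real.pi_ne_zero, Complex.I_ne_zero]
    have hval : FourierTransform.fourier (gC (n+1)) ξ =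
        ((((pAB (n+1)).1.eval ξ : ℝ) : ℂ) + (((pAB (n+1)).2.eval ξ : ℝ) : ℂ) * Complex.I)
          * ((rexp (-(π * ξ^2)) : ℝ) : ℂ) := by
      apply mul_left_cancel₀ hne
      rw [hkey]
      have e1 : (pAB (n+1)).1.eval ξ = ξ * b.eval ξ - (1/(2*π)) * b.derivative.eval ξ := by
        show (X * b - C (1/(2*π)) * derivative b).eval ξ = _
        simp [mul_comm]
      have e2 : (pAB (n+1)).2.eval ξ = (1/(2*π)) * a.derivative.eval ξ - ξ * a.eval ξ := by
        show (C (1/(2*π)) * derivative a - X * a).eval ξ = _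
        simp [mul_comm]
      rw [e1, e2]
      push_cast
      have hπ : (π:ℂ) ≠ 0 := Complex.ofReal_ne_zero.mpr Real.pi_ne_zero
      field_simp
      ring_nf
      simp only [Complex.I_sq]
      ring
    exact hval

lemma cintegral_ofReal {f : ℝ → ℝ} : (∫ x, ((f x : ℝ):ℂ)) = ((∫ x, f x : ℝ) : ℂ) :=
  integral_ofReal

lemma integrable_pow_gauss_trig (n : ℕ) {h : ℝ → ℝ} (hm : Measurable h)
    (hb : ∀ t, |h t| ≤ 1) :
    Integrable (fun x : ℝ => x ^ n * rexp (-(π * x^2)) * h x) := by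
  have h2 := (integrable_pow_gauss n).bdd_mul hm.aestronglyMeasurable
    (c := 1) (Filter.Eventually.of_forall fun x => by simpa using hb x)
  have : (fun x : ℝ => x ^ n * rexp (-(π * x^2)) * h x)
      = fun x => h x * (x ^ n * rexp (-(π * x^2))) := by funext x; ring
  rw [this]; exact h2

lemma cos_sin_int (n : ℕ) (ξ : ℝ) :
    (∫ x : ℝ, x ^ n * rexp (-(π * x^2)) * Real.cos (2*π*ξ*x))
        = (pAB n).1.eval ξ * rexp (-(π * ξ^2)) ∧
    (∫ x : ℝ, x ^ n * rexp (-(π * x^2)) * Real.sin (2*π*ξ*x))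
        = -((pAB n).2.eval ξ * rexp (-(π * ξ^2))) := by
  have hF := fourier_pow_gauss n ξ
  rw [Real.fourier_real_eq_integral_exp_smul] at hF
  have hint : ∀ x : ℝ, Complex.exp (↑(-2 * π * x * ξ) * Complex.I) • gC n x
      = ((x ^ n * rexp (-(π * x^2)) * Real.cos (2*π*ξ*x) : ℝ) : ℂ)
        + ((-(x ^ n * rexp (-(π * x^2)) * Real.sin (2*π*ξ*x)) : ℝ) : ℂ) * Complex.I := by
    intro x
    rw [show -2 * π * x * ξ = -(2*π*ξ*x) from by ring, smul_eq_mul, Complex.exp_mul_I,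
        ← Complex.ofReal_cos, ← Complex.ofReal_sin, Real.cos_neg, Real.sin_neg]
    simp only [gC]
    push_cast
    ring
  rw [integral_congr_ae (Filter.Eventually.of_forall hint)] at hF
  have hic : Integrable (fun x : ℝ =>
      ((x ^ n * rexp (-(π * x^2)) * Real.cos (2*π*ξ*x) : ℝ) : ℂ)) :=
    (integrable_pow_gauss_trig n (Real.measurable_cos.comp (by fun_prop))
      (fun t => Real.abs_cos_le_one _)).ofReal
  have his : Integrable (fun x : ℝ =>
      ((-(x ^ n * rexp (-(π * x^2)) * Real.sin (2*π*ξ*x)) : ℝ) : ℂ) * Complex.I) :=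
    (((integrable_pow_gauss_trig n (Real.measurable_sin.comp (by fun_prop))
      (fun t => Real.abs_sin_le_one _)).neg).ofReal).mul_const _
  rw [integral_add hic his, integral_mul_const] at hF
  rw [cintegral_ofReal, cintegral_ofReal] at hF
  have hre := congrArg Complex.re hF
  have him := congrArg Complex.im hF
  simp only [Complex.add_re, Complex.ofReal_re, Complex.mul_re, Complex.mul_im,
    Complex.I_re, Complex.I_im, Complex.ofReal_im, Complex.add_im] at hre him
  constructor
  · linarith [hre]
  · have : (∫ x : ℝ, -(x ^ n * rexp (-(π * x^2)) * Real.sin (2*π*ξ*x)))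
        = (pAB n).2.eval ξ * rexp (-(π * ξ^2)) := by linarith [him]
    rw [integral_neg] at this
    linarith [this]

/-- The Finsupp exponent vector (k, l) on Fin 2. -/
def ev (k l : ℕ) : Fin 2 →₀ ℕ := Finsupp.single 0 k + Finsupp.single 1 l

lemma ev_apply0 (k l : ℕ) : ev k l 0 = k := by simp [ev]
lemma ev_apply1 (k l : ℕ) : ev k l 1 = l := by simp [ev, Finsupp.single_apply]

lemma ev_inj {k l k' l' : ℕ} (h : ev k l = ev k' l') : k = k' ∧ l = l' := by
  constructor
  · have := congrArg (fun s => s 0) h; simpa [ev_apply0] using this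
  · have := congrArg (fun s => s 1) h; simpa [ev_apply1] using this

lemma ev_sum (k l : ℕ) : ((ev k l).sum fun _ e => e) = k + l := by
  rw [Finsupp.sum_fintype _ _ (fun _ => rfl), Fin.sum_univ_two, ev_apply0, ev_apply1]

lemma finsupp_fin2_eq (d : Fin 2 →₀ ℕ) : d = ev (d 0) (d 1) := by
  ext i; fin_cases i
  · exact (ev_apply0 _ _).symm
  · exact (ev_apply1 _ _).symm

lemma finsupp_fin2_sum (d : Fin 2 →₀ ℕ) : (d.sum fun _ e => e) = d 0 + d 1 := by
  rw [finsupp_fin2_eq d, ev_sum, ev_apply0, ev_apply1]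

/-- Tensor product of two one-variable polynomials as a 2-variable polynomial. -/
def T2 (p q : Polynomial ℝ) : MvPolynomial (Fin 2) ℝ :=
  ∑ k ∈ p.support, ∑ l ∈ q.support,
    MvPolynomial.monomial (ev k l) (p.coeff k * q.coeff l)

lemma T2_eval (p q : Polynomial ℝ) (v : Fin 2 → ℝ) :
    MvPolynomial.eval v (T2 p q) = p.eval (v 0) * q.eval (v 1) := by
  rw [T2, map_sum]
  rw [Polynomial.eval_eq_sum, Polynomial.eval_eq_sum, Polynomial.sum_def, Polynomial.sum_def,
    Finset.sum_mul_sum]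
  refine Finset.sum_congr rfl fun k _ => ?_
  rw [map_sum]
  refine Finset.sum_congr rfl fun l _ => ?_
  rw [MvPolynomial.eval_monomial, ev, Finsupp.prod_add_index (fun i _ => pow_zero (v i))
    (fun i _ a b => pow_add (v i) a b)]
  simp [Finsupp.prod_single_index]
  ring

lemma T2_totalDegree_le (p q : Polynomial ℝ) :
    (T2 p q).totalDegree ≤ p.natDegree + q.natDegree := by
  refine (MvPolynomial.totalDegree_finset_sum _ _).trans (Finset.sup_le fun k hk => ?_)
  refine (MvPolynomial.totalDegree_finset_sum _ _).trans (Finset.sup_le fun l hl => ?_)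
  refine (MvPolynomial.totalDegree_monomial_le _ _).trans ?_
  simp only [Function.id_def]
  rw [ev_sum]
  exact add_le_add (Polynomial.le_natDegree_of_mem_supp k hk)
    (Polynomial.le_natDegree_of_mem_supp l hl)

lemma T2_coeff (p q : Polynomial ℝ) (k l : ℕ) :
    (T2 p q).coeff (ev k l) = p.coeff k * q.coeff l := by
  classical
  rw [T2, MvPolynomial.coeff_sum]
  simp only [MvPolynomial.coeff_sum, MvPolynomial.coeff_monomial]
  have hcong : ∀ k' l', (if ev k' l' = ev k l then p.coeff k' * q.coeff l' else 0)
      = if l' = l then (if k' = k then p.coeff k' * q.coeff l' else 0) else 0 := by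
    intro k' l'
    by_cases h1 : k' = k <;> by_cases h2 : l' = l
    · simp [h1, h2]
    · rw [if_neg (fun h => h2 (ev_inj h).2), if_neg h2]
    · rw [if_neg (fun h => h1 (ev_inj h).1), if_pos h2, if_neg h1]
    · rw [if_neg (fun h => h1 (ev_inj h).1), if_neg h2]
  simp only [hcong]
  rw [Finset.sum_congr rfl fun k' _ => Finset.sum_ite_eq' q.support l
        (fun l' => if k' = k then p.coeff k' * q.coeff l' else 0)]
  by_cases hl : l ∈ q.support
  · simp only [if_pos hl]
    rw [Finset.sum_ite_eq' p.support k]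
    by_cases hk : k ∈ p.support
    · rw [if_pos hk]
    · rw [if_neg hk, Polynomial.notMem_support_iff.mp hk, zero_mul]
  · simp only [if_neg hl]
    simp [Polynomial.notMem_support_iff.mp hl]

section twoD

variable {h1 h2 : ℝ → ℝ}

lemma integrable_sep (d0 d1 : ℕ) (hm1 : Measurable h1) (hb1 : ∀ t, |h1 t| ≤ 1)
    (hm2 : Measurable h2) (hb2 : ∀ t, |h2 t| ≤ 1) :
    Integrable (fun x : ℝ × ℝ =>
      (x.1 ^ d0 * rexp (-(π * x.1^2)) * h1 x.1) * (x.2 ^ d1 * rexp (-(π * x.2^2)) * h2 x.2)) := by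
  rw [show (volume : Measure (ℝ × ℝ)) = (volume : Measure ℝ).prod volume from Measure.volume_eq_prod _ _]
  exact (integrable_pow_gauss_trig d0 hm1 hb1).mul_prod (integrable_pow_gauss_trig d1 hm2 hb2)

lemma integral_sep (d0 d1 : ℕ) :
    (∫ x : ℝ × ℝ,
      (x.1 ^ d0 * rexp (-(π * x.1^2)) * h1 x.1) * (x.2 ^ d1 * rexp (-(π * x.2^2)) * h2 x.2))
    = (∫ t : ℝ, t ^ d0 * rexp (-(π * t^2)) * h1 t)
      * (∫ t : ℝ, t ^ d1 * rexp (-(π * t^2)) * h2 t) := by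
  rw [show (volume : Measure (ℝ × ℝ)) = (volume : Measure ℝ).prod volume from Measure.volume_eq_prod _ _]
  exact integral_prod_mul (fun t => t ^ d0 * rexp (-(π * t^2)) * h1 t)
    (fun t => t ^ d1 * rexp (-(π * t^2)) * h2 t)

variable (P : MvPolynomial (Fin 2) ℝ) (f : ℝ × ℝ → ℝ)
  (hf : ∀ x : ℝ × ℝ, f x = MvPolynomial.eval ![x.1, x.2] P * rexp (-(π * (x.1^2 + x.2^2))))

include hf in
lemma fmul_expand : (fun x : ℝ × ℝ => f x * (h1 x.1 * h2 x.2))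
    = fun x => ∑ d ∈ P.support, P.coeff d *
        ((x.1 ^ (d 0) * rexp (-(π * x.1^2)) * h1 x.1)
          * (x.2 ^ (d 1) * rexp (-(π * x.2^2)) * h2 x.2)) := by
  funext x
  rw [hf x, MvPolynomial.eval_eq']
  rw [Finset.sum_mul, Finset.sum_mul]
  refine Finset.sum_congr rfl fun d _ => ?_
  rw [Fin.prod_univ_two]
  simp only [Matrix.cons_val_zero, Matrix.cons_val_one, Matrix.head_cons]
  rw [show -(π * (x.1^2 + x.2^2)) = -(π * x.1^2) + -(π * x.2^2) by ring, Real.exp_add]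
  ring

include hf in
lemma scalar_integrable (hm1 : Measurable h1) (hb1 : ∀ t, |h1 t| ≤ 1)
    (hm2 : Measurable h2) (hb2 : ∀ t, |h2 t| ≤ 1) :
    Integrable (fun x : ℝ × ℝ => f x * (h1 x.1 * h2 x.2)) := by
  rw [fmul_expand P f hf]
  exact integrable_finset_sum _ fun d _ =>
    (integrable_sep (d 0) (d 1) hm1 hb1 hm2 hb2).const_mul _

include hf in
lemma scalar_int (hm1 : Measurable h1) (hb1 : ∀ t, |h1 t| ≤ 1)
    (hm2 : Measurable h2) (hb2 : ∀ t, |h2 t| ≤ 1) :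
    (∫ x : ℝ × ℝ, f x * (h1 x.1 * h2 x.2))
      = ∑ d ∈ P.support, P.coeff d *
          ((∫ t : ℝ, t ^ (d 0) * rexp (-(π * t^2)) * h1 t)
            * (∫ t : ℝ, t ^ (d 1) * rexp (-(π * t^2)) * h2 t)) := by
  rw [fmul_expand P f hf,
    integral_finset_sum _ fun d _ => (integrable_sep (d 0) (d 1) hm1 hb1 hm2 hb2).const_mul _]
  exact Finset.sum_congr rfl fun d _ => by rw [integral_const_mul, integral_sep]

end twoD

def Qk : ℍ := ⟨0,0,0,1⟩

lemma quat_pt (r θ1 θ2 : ℝ) :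
    expI (-θ1) * (r : ℍ) * expJ (-θ2)
      = (r * (Real.cos θ1 * Real.cos θ2)) • (1:ℍ)
        + (-(r * (Real.sin θ1 * Real.cos θ2))) • Qi
        + (-(r * (Real.cos θ1 * Real.sin θ2))) • Qj
        + (r * (Real.sin θ1 * Real.sin θ2)) • Qk := by
  ext <;>
    simp [Quaternion.re_mul, Quaternion.imI_mul, Quaternion.imJ_mul,
      Quaternion.imK_mul, Quaternion.re_one, Quaternion.imI_one, Quaternion.imJ_one, Quaternion.imK_one] <;> simp [expI, expJ, Qi, Qj, Qk, Real.cos_neg, Real.sin_neg] <;> ring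

lemma quat_integral (w0 w1 w2 w3 : ℝ × ℝ → ℝ) (h0 : Integrable w0) (h1 : Integrable w1)
    (h2 : Integrable w2) (h3 : Integrable w3) :
    (∫ x : ℝ × ℝ, ((w0 x) • (1:ℍ) + (w1 x) • Qi + (w2 x) • Qj + (w3 x) • Qk))
      = (∫ x, w0 x) • (1:ℍ) + (∫ x, w1 x) • Qi + (∫ x, w2 x) • Qj + (∫ x, w3 x) • Qk := by
  have i0 : Integrable (fun x : ℝ × ℝ => w0 x • (1:ℍ)) := h0.smul_const _
  have i1 : Integrable (fun x : ℝ × ℝ => w1 x • Qi) := h1.smul_const _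
  have i2 : Integrable (fun x : ℝ × ℝ => w2 x • Qj) := h2.smul_const _
  have i3 : Integrable (fun x : ℝ × ℝ => w3 x • Qk) := h3.smul_const _
  have i01 : Integrable (fun x : ℝ × ℝ => w0 x • (1:ℍ) + w1 x • Qi) := i0.add i1
  have i012 : Integrable (fun x : ℝ × ℝ => w0 x • (1:ℍ) + w1 x • Qi + w2 x • Qj) := i01.add i2
  rw [integral_add i012 i3, integral_add i01 i2, integral_add i0 i1,
    integral_smul_const, integral_smul_const, integral_smul_const, integral_smul_const]

lemma quat_components (q : ℍ) (a b c d : ℝ) (h : q = a • (1:ℍ) + b • Qi + c • Qj + d • Qk) :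
    q.re = a ∧ q.imI = b ∧ q.imJ = c ∧ q.imK = d := by
  subst h
  refine ⟨?_, ?_, ?_, ?_⟩ <;> simp [Quaternion.re_one, Quaternion.imI_one, Quaternion.imJ_one, Quaternion.imK_one] <;> simp [Qi, Qj, Qk]

lemma quat_mul_coe (q : ℍ) (E : ℝ) :
    (q * ((E:ℝ) : ℍ)).re = q.re * E ∧ (q * ((E:ℝ) : ℍ)).imI = q.imI * E
      ∧ (q * ((E:ℝ) : ℍ)).imJ = q.imJ * E ∧ (q * ((E:ℝ) : ℍ)).imK = q.imK * E := by
  refine ⟨?_, ?_, ?_, ?_⟩ <;> simp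

/-- Selector polynomials for the four quaternion components. -/
def selA : Fin 4 → ℕ → Polynomial ℝ :=
  ![fun n => (pAB n).1, fun n => (pAB n).2, fun n => (pAB n).1, fun n => (pAB n).2]
def selB : Fin 4 → ℕ → Polynomial ℝ :=
  ![fun n => (pAB n).1, fun n => (pAB n).1, fun n => (pAB n).2, fun n => (pAB n).2]

lemma selA_natDegree_le (m : Fin 4) (n : ℕ) : (selA m n).natDegree ≤ n := by
  fin_cases m <;>
    first
      | exact (pAB_natDegree_le n).1
      | exact (pAB_natDegree_le n).2

lemma selB_natDegree_le (m : Fin 4) (n : ℕ) : (selB m n).natDegree ≤ n := by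
  fin_cases m <;>
    first
      | exact (pAB_natDegree_le n).1
      | exact (pAB_natDegree_le n).2

def cpoly (P : MvPolynomial (Fin 2) ℝ) (m : Fin 4) : MvPolynomial (Fin 2) ℝ :=
  ∑ d ∈ P.support, MvPolynomial.C (P.coeff d) * T2 (selA m (d 0)) (selB m (d 1))

lemma cpoly_totalDegree_le (P : MvPolynomial (Fin 2) ℝ) (m : Fin 4) :
    (cpoly P m).totalDegree ≤ P.totalDegree := by
  refine (MvPolynomial.totalDegree_finset_sum _ _).trans (Finset.sup_le fun d hd => ?_)
  calc (MvPolynomial.C (P.coeff d) * T2 (selA m (d 0)) (selB m (d 1))).totalDegree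
      ≤ (MvPolynomial.C (P.coeff d) : MvPolynomial (Fin 2) ℝ).totalDegree
          + (T2 (selA m (d 0)) (selB m (d 1))).totalDegree := MvPolynomial.totalDegree_mul _ _
    _ ≤ 0 + ((selA m (d 0)).natDegree + (selB m (d 1)).natDegree) := by
        rw [MvPolynomial.totalDegree_C]
        exact add_le_add le_rfl (T2_totalDegree_le _ _)
    _ ≤ d 0 + d 1 := by
        rw [zero_add]
        exact add_le_add (selA_natDegree_le m (d 0)) (selB_natDegree_le m (d 1))
    _ ≤ P.totalDegree := by
        rw [← finsupp_fin2_sum d]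
        exact MvPolynomial.le_totalDegree hd

lemma cpoly_coeff (P : MvPolynomial (Fin 2) ℝ) (m : Fin 4) (k l : ℕ) :
    (cpoly P m).coeff (ev k l)
      = ∑ d ∈ P.support, P.coeff d * ((selA m (d 0)).coeff k * (selB m (d 1)).coeff l) := by
  rw [cpoly, MvPolynomial.coeff_sum]
  exact Finset.sum_congr rfl fun d _ => by rw [MvPolynomial.coeff_C_mul, T2_coeff]

lemma cpoly_sup_deg (P : MvPolynomial (Fin 2) ℝ) :
    (Finset.univ.sup fun m : Fin 4 => (cpoly P m).totalDegree) = P.totalDegree := by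
  by_cases hP : P = 0
  · subst hP
    simp [cpoly]
  refine le_antisymm (Finset.sup_le fun m _ => cpoly_totalDegree_le P m) ?_
  have hne : P.support.Nonempty :=
    Finset.nonempty_iff_ne_empty.mpr (fun h => hP (MvPolynomial.support_eq_empty.mp h))
  obtain ⟨d, hd, hsum⟩ := Finset.exists_mem_eq_sup P.support hne (fun s => s.sum fun _ e => e)
  have htd : P.totalDegree = d 0 + d 1 := by
    rw [show P.totalDegree = P.support.sup (fun s => s.sum fun _ e => e) from rfl, hsum,
      finsupp_fin2_sum]
  -- choose the right component
  set m : Fin 4 := if Even (d 0) then (if Even (d 1) then 0 else 2)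
      else (if Even (d 1) then 1 else 3) with hm
  have hsel : (selA m (d 0)).natDegree = d 0 ∧ (selA m (d 0)) ≠ 0
      ∧ (selB m (d 1)).natDegree = d 1 ∧ (selB m (d 1)) ≠ 0 := by
    by_cases e0 : Even (d 0) <;> by_cases e1 : Even (d 1)
    · have hm' : m = 0 := by rw [hm, if_pos e0, if_pos e1]
      obtain ⟨_, h1, h2⟩ := (pAB_deg (d 0)).1 e0
      obtain ⟨_, h3, h4⟩ := (pAB_deg (d 1)).1 e1
      rw [hm']
      exact ⟨h1, h2, h3, h4⟩
    · have hm' : m = 2 := by rw [hm, if_pos e0, if_neg e1]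
      obtain ⟨_, h1, h2⟩ := (pAB_deg (d 0)).1 e0
      obtain ⟨_, h3, h4⟩ := (pAB_deg (d 1)).2 e1
      rw [hm']
      exact ⟨h1, h2, h3, h4⟩
    · have hm' : m = 1 := by rw [hm, if_neg e0, if_pos e1]
      obtain ⟨_, h1, h2⟩ := (pAB_deg (d 0)).2 e0
      obtain ⟨_, h3, h4⟩ := (pAB_deg (d 1)).1 e1
      rw [hm']
      exact ⟨h1, h2, h3, h4⟩
    · have hm' : m = 3 := by rw [hm, if_neg e0, if_neg e1]
      obtain ⟨_, h1, h2⟩ := (pAB_deg (d 0)).2 e0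
      obtain ⟨_, h3, h4⟩ := (pAB_deg (d 1)).2 e1
      rw [hm']
      exact ⟨h1, h2, h3, h4⟩
  obtain ⟨hA, hA0, hB, hB0⟩ := hsel
  have hcoeff : (cpoly P m).coeff (ev (d 0) (d 1)) ≠ 0 := by
    rw [cpoly_coeff]
    rw [Finset.sum_eq_single_of_mem d hd ?side]
    · refine mul_ne_zero (MvPolynomial.mem_support_iff.mp hd) (mul_ne_zero ?_ ?_)
      · have h' := Polynomial.leadingCoeff_ne_zero.mpr hA0
        rw [Polynomial.leadingCoeff, hA] at h'
        exact h'
      · have h' := Polynomial.leadingCoeff_ne_zero.mpr hB0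
        rw [Polynomial.leadingCoeff, hB] at h'
        exact h'
    case side =>
      intro d' hd' hne'
      rcases lt_or_ge (d' 0) (d 0) with h0 | h0
      · rw [Polynomial.coeff_eq_zero_of_natDegree_lt
          (lt_of_le_of_lt (selA_natDegree_le m (d' 0)) h0)]
        ring
      rcases lt_or_ge (d' 1) (d 1) with h1 | h1
      · rw [Polynomial.coeff_eq_zero_of_natDegree_lt
          (lt_of_le_of_lt (selB_natDegree_le m (d' 1)) h1)]
        ring
      exfalso
      have hle : d' 0 + d' 1 ≤ d 0 + d 1 := by
        rw [← finsupp_fin2_sum, ← finsupp_fin2_sum]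
        rw [← hsum]
        exact Finset.le_sup (f := fun s : Fin 2 →₀ ℕ => s.sum fun _ e => e) hd'
      have h0' : d' 0 = d 0 := by omega
      have h1' : d' 1 = d 1 := by omega
      exact hne' (by rw [finsupp_fin2_eq d', h0', h1', ← finsupp_fin2_eq d])
  have hmem : ev (d 0) (d 1) ∈ (cpoly P m).support := MvPolynomial.mem_support_iff.mpr hcoeff
  have hle := MvPolynomial.le_totalDegree hmem
  rw [ev_sum] at hle
  rw [htd]
  exact le_trans hle (Finset.le_sup (f := fun m => (cpoly P m).totalDegree) (Finset.mem_univ m))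

lemma cpoly_eval (P : MvPolynomial (Fin 2) ℝ) (m : Fin 4) (ξ : ℝ × ℝ) :
    MvPolynomial.eval ![ξ.1, ξ.2] (cpoly P m)
      = ∑ d ∈ P.support, P.coeff d *
          ((selA m (d 0)).eval ξ.1 * (selB m (d 1)).eval ξ.2) := by
  rw [cpoly, map_sum]
  refine Finset.sum_congr rfl fun d _ => ?_
  rw [map_mul, MvPolynomial.eval_C, T2_eval]
  simp only [Matrix.cons_val_zero, Matrix.cons_val_one, Matrix.head_cons]


/-- QFT of a polynomial times a Gaussian is a quaternion polynomial times the Gaussian. -/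
theorem qft_poly_gaussian (P : MvPolynomial (Fin 2) ℝ)
    (f : ℝ × ℝ → ℝ)
    (hf : ∀ x : ℝ × ℝ, f x = MvPolynomial.eval ![x.1, x.2] P * Real.exp (-(π * (x.1 ^ 2 + x.2 ^ 2)))) :
    ∃ c : Fin 4 → MvPolynomial (Fin 2) ℝ,
      (Finset.univ.sup fun i => (c i).totalDegree) = P.totalDegree ∧
      ∀ ξ : ℝ × ℝ, QFT (fun x => ((f x : ℝ) : ℍ)) ξ =
        qpoly c ξ * ((Real.exp (-(π * (ξ.1 ^ 2 + ξ.2 ^ 2))) : ℝ) : ℍ) := by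
  classical
  refine ⟨fun m => cpoly P m, cpoly_sup_deg P, ?_⟩
  intro ξ
  have hEsplit : rexp (-(π * (ξ.1 ^ 2 + ξ.2 ^ 2)))
      = rexp (-(π * ξ.1^2)) * rexp (-(π * ξ.2^2)) := by
    rw [← Real.exp_add]; ring_nf
  have hmc1 : Measurable fun t : ℝ => Real.cos (2*π*ξ.1*t) := by fun_prop
  have hms1 : Measurable fun t : ℝ => Real.sin (2*π*ξ.1*t) := by fun_prop
  have hmc2 : Measurable fun t : ℝ => Real.cos (2*π*ξ.2*t) := by fun_prop
  have hms2 : Measurable fun t : ℝ => Real.sin (2*π*ξ.2*t) := by fun_prop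
  have hbc1 : ∀ t : ℝ, |Real.cos (2*π*ξ.1*t)| ≤ 1 := fun t => Real.abs_cos_le_one _
  have hbs1 : ∀ t : ℝ, |Real.sin (2*π*ξ.1*t)| ≤ 1 := fun t => Real.abs_sin_le_one _
  have hbc2 : ∀ t : ℝ, |Real.cos (2*π*ξ.2*t)| ≤ 1 := fun t => Real.abs_cos_le_one _
  have hbs2 : ∀ t : ℝ, |Real.sin (2*π*ξ.2*t)| ≤ 1 := fun t => Real.abs_sin_le_one _
  -- the four scalar integrals
  have e0 : (∫ x : ℝ×ℝ, f x * (Real.cos (2*π*ξ.1*x.1) * Real.cos (2*π*ξ.2*x.2)))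
      = MvPolynomial.eval ![ξ.1, ξ.2] (cpoly P 0) * rexp (-(π * (ξ.1 ^ 2 + ξ.2 ^ 2))) := by
    rw [scalar_int P f hf hmc1 hbc1 hmc2 hbc2, cpoly_eval, Finset.sum_mul]
    refine Finset.sum_congr rfl fun d _ => ?_
    rw [(cos_sin_int (d 0) ξ.1).1, (cos_sin_int (d 1) ξ.2).1, hEsplit]
    rw [show selA 0 = fun n => (pAB n).1 from rfl, show selB 0 = fun n => (pAB n).1 from rfl]
    ring
  have e1 : (∫ x : ℝ×ℝ, f x * (Real.sin (2*π*ξ.1*x.1) * Real.cos (2*π*ξ.2*x.2)))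
      = -(MvPolynomial.eval ![ξ.1, ξ.2] (cpoly P 1) * rexp (-(π * (ξ.1 ^ 2 + ξ.2 ^ 2)))) := by
    rw [scalar_int P f hf hms1 hbs1 hmc2 hbc2, cpoly_eval, Finset.sum_mul, ← Finset.sum_neg_distrib]
    refine Finset.sum_congr rfl fun d _ => ?_
    rw [(cos_sin_int (d 0) ξ.1).2, (cos_sin_int (d 1) ξ.2).1, hEsplit]
    rw [show selA 1 = fun n => (pAB n).2 from rfl, show selB 1 = fun n => (pAB n).1 from rfl]
    ring
  have e2 : (∫ x : ℝ×ℝ, f x * (Real.cos (2*π*ξ.1*x.1) * Real.sin (2*π*ξ.2*x.2)))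
      = -(MvPolynomial.eval ![ξ.1, ξ.2] (cpoly P 2) * rexp (-(π * (ξ.1 ^ 2 + ξ.2 ^ 2)))) := by
    rw [scalar_int P f hf hmc1 hbc1 hms2 hbs2, cpoly_eval, Finset.sum_mul, ← Finset.sum_neg_distrib]
    refine Finset.sum_congr rfl fun d _ => ?_
    rw [(cos_sin_int (d 0) ξ.1).1, (cos_sin_int (d 1) ξ.2).2, hEsplit]
    rw [show selA 2 = fun n => (pAB n).1 from rfl, show selB 2 = fun n => (pAB n).2 from rfl]
    ring
  have e3 : (∫ x : ℝ×ℝ, f x * (Real.sin (2*π*ξ.1*x.1) * Real.sin (2*π*ξ.2*x.2)))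
      = MvPolynomial.eval ![ξ.1, ξ.2] (cpoly P 3) * rexp (-(π * (ξ.1 ^ 2 + ξ.2 ^ 2))) := by
    rw [scalar_int P f hf hms1 hbs1 hms2 hbs2, cpoly_eval, Finset.sum_mul]
    refine Finset.sum_congr rfl fun d _ => ?_
    rw [(cos_sin_int (d 0) ξ.1).2, (cos_sin_int (d 1) ξ.2).2, hEsplit]
    rw [show selA 3 = fun n => (pAB n).2 from rfl, show selB 3 = fun n => (pAB n).2 from rfl]
    ring
  -- assembly
  have i0 := scalar_integrable P f hf hmc1 hbc1 hmc2 hbc2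
  have i1 := (scalar_integrable P f hf hms1 hbs1 hmc2 hbc2).neg
  have i2 := (scalar_integrable P f hf hmc1 hbc1 hms2 hbs2).neg
  have i3 := scalar_integrable P f hf hms1 hbs1 hms2 hbs2
  have hQ : QFT (fun x => ((f x : ℝ) : ℍ)) ξ
      = (∫ x : ℝ×ℝ, f x * (Real.cos (2*π*ξ.1*x.1) * Real.cos (2*π*ξ.2*x.2))) • (1:ℍ)
        + (∫ x : ℝ×ℝ, -(f x * (Real.sin (2*π*ξ.1*x.1) * Real.cos (2*π*ξ.2*x.2)))) • Qi
        + (∫ x : ℝ×ℝ, -(f x * (Real.cos (2*π*ξ.1*x.1) * Real.sin (2*π*ξ.2*x.2)))) • Qj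
        + (∫ x : ℝ×ℝ, f x * (Real.sin (2*π*ξ.1*x.1) * Real.sin (2*π*ξ.2*x.2))) • Qk := by
    rw [show QFT (fun x => ((f x : ℝ) : ℍ)) ξ
        = ∫ x : ℝ×ℝ, expI (-(2 * π * ξ.1 * x.1)) * ((f x : ℝ) : ℍ)
            * expJ (-(2 * π * ξ.2 * x.2)) from rfl]
    rw [integral_congr_ae (Filter.Eventually.of_forall fun x : ℝ×ℝ =>
      quat_pt (f x) (2 * π * ξ.1 * x.1) (2 * π * ξ.2 * x.2))]
    exact quat_integral _ _ _ _ i0 i1 i2 i3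
  rw [hQ, e0, integral_neg, e1, integral_neg, e2, e3, neg_neg, neg_neg]
  ext <;>
    simp [Quaternion.re_one, Quaternion.imI_one, Quaternion.imJ_one, Quaternion.imK_one] <;> simp [qpoly, Qi, Qj, Qk]
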